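/- Let A be a Dedekind domain and let f be a nonzero non-unit element of the polynomial ring A[x]. Let S be the multiplicative subset of A[x] generated by f together with all elements of the form 1 + f·g with g ∈ A[x]. Then the localization S⁻¹(A[x]) is a Dedekind domain. -/

import Mathlib

open Polynomial

noncomputable section

variable {R : Type*} [CommRing R]
variable (S : Type*) [CommRing S] [Algebra R S]

/-- Algebra structure on `S[X]` over `R[X]` induced by `algebraMap R S`. -/
def polyAlgebra : Algebra R[X] S[X] :=
  (Polynomial.mapRingHom (algebraMap R S)).toAlgebra

attribute [local instance] polyAlgebra

lemma polyAlgebraMap_def :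
    algebraMap R[X] S[X] = Polynomial.mapRingHom (algebraMap R S) := rfl

lemma mapC_le_nonZeroDivisors [IsDomain R] {M : Submonoid R} (hM : M ≤ nonZeroDivisors R) :
    M.map (C : R →+* R[X]) ≤ nonZeroDivisors R[X] := by
  rintro x ⟨a, ha, rfl⟩
  exact mem_nonZeroDivisors_of_ne_zero
    (by simpa using nonZeroDivisors.ne_zero (hM ha))

theorem poly_isLocalization (M : Submonoid R) [IsLocalization M S] : IsLocalization (M.map (C : R →+* R[X])) S[X] where
  map_units := by
    rintro ⟨p, q, hq, rfl⟩
    simp only [polyAlgebraMap_def, coe_mapRingHom, map_C]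
    exact IsUnit.map _ (IsLocalization.map_units _ ⟨q, hq⟩)
  surj p := by
    simp only [polyAlgebraMap_def, coe_mapRingHom, Prod.exists, Subtype.exists,
      Submonoid.mem_map, exists_prop, exists_exists_and_eq_and, map_C]
    refine p.induction_on' ?_ ?_
    · rintro p p' ⟨x, m, hm, hxm⟩ ⟨x', m', hm', hxm'⟩
      refine ⟨x * C m' + x' * C m, m * m', Submonoid.mul_mem _ hm hm', ?_⟩
      simp only [Polynomial.map_mul, Polynomial.map_add, map_C, map_mul, C_mul]
      rw [← hxm, ← hxm']
      ring
    · intro u s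
      obtain ⟨⟨r, m⟩, hr⟩ := IsLocalization.surj M s
      refine ⟨monomial u r, m, m.property, ?_⟩
      simp only [map_monomial]
      rw [← hr, mul_comm, C_mul_monomial, mul_comm]
  exists_of_eq {p q} := by
    intro h
    simp_rw [polyAlgebraMap_def, coe_mapRingHom, Polynomial.ext_iff, coeff_map] at h
    choose c hc using fun m ↦ IsLocalization.exists_of_eq (M := M) (h m)
    simp only [Subtype.exists, Submonoid.mem_map, exists_prop, exists_exists_and_eq_and]
    classical
    refine ⟨Finset.prod (p.support ∪ q.support) fun m ↦ c m, M.prod_mem fun m _ ↦ (c m).property,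
      ?_⟩
    ext m
    simp only [coeff_C_mul]
    by_cases h : m ∈ p.support ∪ q.support
    · exact Finset.prod_mul_eq_prod_mul_of_exists m h (hc m)
    · simp only [Finset.mem_union, mem_support_iff, ne_eq, not_or, Decidable.not_not] at h
      rw [h.left, h.right]


variable {K : Type*} [Field K] [Algebra R K]

theorem exists_map_eq_of_isIntegral [IsDomain R] [IsIntegrallyClosed R] [IsFractionRing R K]
    {t : K[X]} (ht : IsIntegral R[X] t) : ∃ s : R[X], s.map (algebraMap R K) = t := by
  obtain ⟨p, pm, pe⟩ := ht
  set n := p.natDegree with hn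
  have hn0 : 0 < n := by
    rcases Nat.eq_zero_or_pos n with h0 | h
    · exfalso
      have : p = 1 := pm.natDegree_eq_zero.mp h0
      rw [this] at pe
      simp at pe
    · exact h
  set N : ℕ := t.natDegree + (Finset.range (n + 1)).sup (fun i => (p.coeff i).natDegree) + 1
    with hN
  have hN1 : t.natDegree < N := by omega
  have hN2 : ∀ i, i ≤ n → (p.coeff i).natDegree < N := by
    intro i hi
    have : (p.coeff i).natDegree ≤ (Finset.range (n + 1)).sup (fun j => (p.coeff j).natDegree) :=
      Finset.le_sup (f := fun j => (p.coeff j).natDegree) (Finset.mem_range.mpr (by omega))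
    omega
  set u : K[X] := X ^ N - t with hu
  have hum : u.Monic := by
    apply monic_X_pow_sub
    exact lt_of_le_of_lt degree_le_natDegree (by exact_mod_cast hN1)
  set G : R[X] := p.eval ((X : R[X]) ^ N) with hG
  -- G is monic
  have hGm : G.Monic := by
    have hGsum : G = ∑ i ∈ Finset.range (n + 1), p.coeff i * (X : R[X]) ^ (N * i) := by
      rw [hG, eval_eq_sum_range]
      exact Finset.sum_congr rfl fun i _ => by rw [← pow_mul]
    rw [hGsum, Finset.sum_range_succ, pm.coeff_natDegree, one_mul, add_comm]
    apply monic_X_pow_add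
    apply lt_of_le_of_lt (degree_sum_le _ _)
    rw [Finset.sup_lt_iff (by exact_mod_cast WithBot.bot_lt_coe (N * n))]
    intro i hi
    rw [Finset.mem_range] at hi
    calc degree (p.coeff i * (X : R[X]) ^ (N * i))
        ≤ degree (p.coeff i) + degree ((X : R[X]) ^ (N * i)) := degree_mul_le _ _
      _ ≤ ((p.coeff i).natDegree : WithBot ℕ) + (N * i : ℕ) := by
          rw [degree_X_pow]
          exact add_le_add_left degree_le_natDegree _
      _ < (N * n : ℕ) := by
          rw [← Nat.cast_add, Nat.cast_lt]
          have := hN2 i (by omega)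
          calc (p.coeff i).natDegree + N * i < N + N * i := by omega
            _ = N * (i + 1) := by ring
            _ ≤ N * n := Nat.mul_le_mul_left _ (by omega)
  -- u divides the image of G
  have hdvd : u ∣ G.map (algebraMap R K) := by
    have hφG : G.map (algebraMap R K) = (p.map (algebraMap R[X] K[X])).eval ((X : K[X]) ^ N) := by
      have h0 : (G.map (algebraMap R K) : K[X]) = algebraMap R[X] K[X] G := rfl
      have hX : algebraMap R[X] K[X] ((X : R[X]) ^ N) = (X : K[X]) ^ N := by
        rw [map_pow, polyAlgebraMap_def, coe_mapRingHom, map_X]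
      rw [h0, hG, eval_map, ← hX, eval₂_at_apply]
    have hpe : (p.map (algebraMap R[X] K[X])).eval t = 0 := by
      rw [eval_map]
      exact pe
    have := sub_dvd_eval_sub ((X : K[X]) ^ N) t (p.map (algebraMap R[X] K[X]))
    rw [hpe, sub_zero, ← hφG] at this
    exact this
  obtain ⟨g', hg'⟩ := IsIntegrallyClosed.eq_map_mul_C_of_dvd K hGm hdvd
  rw [hum.leadingCoeff, map_one, mul_one] at hg'
  refine ⟨X ^ N - g', ?_⟩
  rw [Polynomial.map_sub, Polynomial.map_pow, map_X, hg', hu]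
  ring

theorem polynomial_isIntegrallyClosed [IsDomain R] [IsIntegrallyClosed R] :
    IsIntegrallyClosed R[X] := by
  let K := FractionRing R
  let F := FractionRing R[X]
  haveI : IsLocalization ((nonZeroDivisors R).map (C : R →+* R[X])) K[X] :=
    poly_isLocalization (S := K) (nonZeroDivisors R)
  have hMle : (nonZeroDivisors R).map (C : R →+* R[X]) ≤ nonZeroDivisors R[X] :=
    mapC_le_nonZeroDivisors le_rfl
  have h : ∀ y : (nonZeroDivisors R).map (C : R →+* R[X]),
      IsUnit (algebraMap R[X] F y) := by
    rintro ⟨y, hy⟩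
    exact IsUnit.mk0 _ (mt IsFractionRing.to_map_eq_zero_iff.mp (nonZeroDivisors.ne_zero
      (hMle hy)))
  letI : Algebra K[X] F := (IsLocalization.lift h).toAlgebra
  haveI : IsScalarTower R[X] K[X] F :=
    IsScalarTower.of_algebraMap_eq fun x => (IsLocalization.lift_eq h x).symm
  haveI : IsFractionRing K[X] F :=
    IsFractionRing.isFractionRing_of_isDomain_of_isLocalization
      ((nonZeroDivisors R).map (C : R →+* R[X])) K[X] F
  refine (isIntegrallyClosed_iff F).mpr ?_
  intro x hx
  have hx' : IsIntegral K[X] x := hx.tower_top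
  obtain ⟨t, ht⟩ :=
    (isIntegrallyClosed_iff F).mp (inferInstance : IsIntegrallyClosed K[X]) hx'
  have htI : IsIntegral R[X] t :=
    IsIntegral.tower_bot (IsFractionRing.injective K[X] F) (ht.symm ▸ hx)
  obtain ⟨s, hs⟩ := exists_map_eq_of_isIntegral (K := K) htI
  refine ⟨s, ?_⟩
  rw [IsScalarTower.algebraMap_apply R[X] K[X] F,
    show algebraMap R[X] K[X] s = s.map (algebraMap R K) from rfl, hs, ht]
-- Helper: two comparable primes of R[X] over ⊥, the smaller nonzero: impossible
theorem no_two_primes_over_bot {B : Type*} [CommRing B] [IsDomain B]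
    (P1 P2 : Ideal B[X]) [hP1 : P1.IsPrime] [hP2 : P2.IsPrime]
    (h01 : ⊥ < P1) (h12 : P1 < P2) (hd2 : P2.comap (C : B →+* B[X]) = ⊥) : False := by
  let K := FractionRing B
  haveI : IsLocalization ((nonZeroDivisors B).map (C : B →+* B[X])) K[X] :=
    poly_isLocalization (S := K) (nonZeroDivisors B)
  set M := (nonZeroDivisors B).map (C : B →+* B[X]) with hM
  have hMle : M ≤ nonZeroDivisors B[X] := mapC_le_nonZeroDivisors le_rfl
  have hdisj : ∀ (P : Ideal B[X]), P.IsPrime → P.comap (C : B →+* B[X]) ≤ ⊥ →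
      Disjoint (M : Set B[X]) (P : Set B[X]) := by
    intro P _ hP
    rw [Set.disjoint_left]
    rintro x ⟨a, ha, rfl⟩ hxP
    exact nonZeroDivisors.ne_zero ha (hP hxP)
  have hdisj1 : Disjoint (M : Set B[X]) (P1 : Set B[X]) :=
    hdisj P1 hP1 (le_trans (Ideal.comap_mono h12.le) hd2.le)
  have hdisj2 : Disjoint (M : Set B[X]) (P2 : Set B[X]) := hdisj P2 hP2 hd2.le
  set Q1 : Ideal K[X] := P1.map (algebraMap B[X] K[X]) with hQ1
  set Q2 : Ideal K[X] := P2.map (algebraMap B[X] K[X]) with hQ2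
  have hQ1p : Q1.IsPrime := IsLocalization.isPrime_of_isPrime_disjoint M K[X] P1 hP1 hdisj1
  have hQ2p : Q2.IsPrime := IsLocalization.isPrime_of_isPrime_disjoint M K[X] P2 hP2 hdisj2
  have hc1 : Q1.comap (algebraMap B[X] K[X]) = P1 :=
    IsLocalization.comap_map_of_isPrime_disjoint M K[X] hP1 hdisj1
  have hc2 : Q2.comap (algebraMap B[X] K[X]) = P2 :=
    IsLocalization.comap_map_of_isPrime_disjoint M K[X] hP2 hdisj2
  have hQ1ne : Q1 ≠ ⊥ := by
    intro h
    apply h01.ne'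
    rw [← hc1, h]
    ext x
    simp only [Ideal.mem_comap, Ideal.mem_bot,
      map_eq_zero_iff _ (IsLocalization.injective K[X] hMle)]
  have hQlt : Q1 < Q2 := by
    refine lt_of_le_of_ne (Ideal.map_mono h12.le) fun h => h12.ne ?_
    rw [← hc1, ← hc2, h]
  have hQ1m : Q1.IsMaximal := hQ1p.isMaximal hQ1ne
  exact hQlt.ne (hQ1m.eq_of_le hQ2p.ne_top hQlt.le)

theorem no_chain_poly_pid {B : Type*} [CommRing B] [IsDomain B] [IsPrincipalIdealRing B]
    (P1 P2 P3 : Ideal B[X]) [hP1 : P1.IsPrime] [hP2 : P2.IsPrime] [hP3 : P3.IsPrime]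
    (h01 : ⊥ < P1) (h12 : P1 < P2) (h23 : P2 < P3) : False := by
  set d2 : Ideal B := P2.comap (C : B →+* B[X]) with hd2def
  by_cases hd2 : d2 = ⊥
  · exact no_two_primes_over_bot P1 P2 h01 h12 hd2
  · haveI hd2p : d2.IsPrime := Ideal.IsPrime.comap _
    have hd2m : d2.IsMaximal := hd2p.isMaximal hd2
    set ψ : B[X] →+* (B ⧸ d2)[X] := mapRingHom (Ideal.Quotient.mk d2) with hψdef
    have hψs : Function.Surjective ψ := Polynomial.map_surjective _ Ideal.Quotient.mk_surjective
    have hker : RingHom.ker ψ = d2.map (C : B →+* B[X]) := by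
      rw [hψdef, Polynomial.ker_mapRingHom, Ideal.mk_ker]
    have hkerP2 : RingHom.ker ψ ≤ P2 := by
      rw [hker]
      exact Ideal.map_le_iff_le_comap.mpr le_rfl
    by_cases hP2k : P2 = RingHom.ker ψ
    · -- descent case : P1 < (C π)
      obtain ⟨x, hxP, hx0⟩ := Submodule.exists_mem_ne_zero_of_ne_bot h01.ne'
      haveI : d2.IsPrincipal := IsPrincipalIdealRing.principal d2
      set π := Submodule.IsPrincipal.generator d2 with hπdef
      have hπ : Prime π := Submodule.IsPrincipal.prime_generator_of_isPrime d2 hd2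
      have hCπ : Prime (C π : B[X]) := Polynomial.prime_C_iff.mpr hπ
      have hP2span : P2 = Ideal.span {(C π : B[X])} := by
        rw [hP2k, hker, ← Ideal.span_singleton_generator d2, Ideal.map_span,
          Set.image_singleton]
      have hCπnot : (C π : B[X]) ∉ P1 := by
        intro h
        exact h12.not_ge (hP2span ▸ (Ideal.span_singleton_le_iff_mem P1).mpr h)
      have key : ∀ n : ℕ, ∃ y ∈ P1, x = (C π : B[X]) ^ n * y := by
        intro n
        induction n with
        | zero => exact ⟨x, hxP, by simp⟩
        | succ n ih =>
          obtain ⟨y, hyP, hxy⟩ := ih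
          obtain ⟨z, hz⟩ := Ideal.mem_span_singleton.mp (hP2span ▸ h12.le hyP)
          have hzP : z ∈ P1 := ((hP1.mem_or_mem (hz ▸ hyP)).resolve_left hCπnot)
          exact ⟨z, hzP, by rw [hxy, hz, pow_succ]; ring⟩
      obtain ⟨n, hn⟩ := FiniteMultiplicity.of_prime_left hCπ hx0
      obtain ⟨y, _, hxy⟩ := key (n + 1)
      exact hn ⟨y, hxy⟩
    · have hlt : RingHom.ker ψ < P2 := lt_of_le_of_ne hkerP2 (Ne.symm hP2k)
      have hP2' : (P2.map ψ).IsPrime := Ideal.map_isPrime_of_surjective hψs hkerP2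
      have hP3' : (P3.map ψ).IsPrime :=
        Ideal.map_isPrime_of_surjective hψs (hkerP2.trans h23.le)
      have hcom2 : (P2.map ψ).comap ψ = P2 := by
        rw [Ideal.comap_map_of_surjective ψ hψs, sup_eq_left.mpr]
        rw [← RingHom.ker_eq_comap_bot]
        exact hkerP2
      have hcom3 : (P3.map ψ).comap ψ = P3 := by
        rw [Ideal.comap_map_of_surjective ψ hψs, sup_eq_left.mpr]
        rw [← RingHom.ker_eq_comap_bot]
        exact hkerP2.trans h23.le
      have hne : P2.map ψ ≠ ⊥ := by
        intro h
        apply hP2k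
        rw [← hcom2, h, RingHom.ker_eq_comap_bot]
      letI : Field (B ⧸ d2) := Ideal.Quotient.field d2
      have hmax : (P2.map ψ).IsMaximal := hP2'.isMaximal hne
      have hlt' : P2.map ψ < P3.map ψ := by
        refine lt_of_le_of_ne (Ideal.map_mono h23.le) fun h => h23.ne ?_
        rw [← hcom2, ← hcom3, h]
      exact hlt'.ne (hmax.eq_of_le hP3'.ne_top hlt'.le)
theorem no_chain_poly_dedekind {A : Type*} [CommRing A] [IsDedekindDomain A]
    (P1 P2 P3 : Ideal A[X]) [hP1 : P1.IsPrime] [hP2 : P2.IsPrime] [hP3 : P3.IsPrime]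
    (h01 : ⊥ < P1) (h12 : P1 < P2) (h23 : P2 < P3) : False := by
  set d2 : Ideal A := P2.comap (C : A →+* A[X]) with hd2def
  by_cases hd2 : d2 = ⊥
  · exact no_two_primes_over_bot P1 P2 h01 h12 hd2
  haveI hd2p : d2.IsPrime := Ideal.IsPrime.comap _
  have hd2m : d2.IsMaximal := hd2p.isMaximal hd2
  have hd3 : P3.comap (C : A →+* A[X]) ≤ d2 := by
    haveI : (P3.comap (C : A →+* A[X])).IsPrime := Ideal.IsPrime.comap _
    exact (hd2m.eq_of_le this.ne_top (Ideal.comap_mono h23.le)).symm.le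
  set B := Localization.AtPrime d2 with hB
  haveI : IsDiscreteValuationRing B :=
    IsLocalization.AtPrime.isDiscreteValuationRing_of_dedekind_domain A hd2 B
  haveI : IsLocalization (d2.primeCompl.map (C : A →+* A[X])) B[X] :=
    poly_isLocalization (S := B) d2.primeCompl
  set M := d2.primeCompl.map (C : A →+* A[X]) with hM
  have hMle : M ≤ nonZeroDivisors A[X] :=
    mapC_le_nonZeroDivisors d2.primeCompl_le_nonZeroDivisors
  have hdisj : ∀ P : Ideal A[X], P.comap (C : A →+* A[X]) ≤ d2 →
      Disjoint (M : Set A[X]) (P : Set A[X]) := by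
    intro P hP
    rw [Set.disjoint_left]
    rintro x ⟨a, ha, rfl⟩ hxP
    exact ha (hP hxP)
  have hdisj1 := hdisj P1 (le_trans (Ideal.comap_mono h12.le) le_rfl)
  have hdisj2 := hdisj P2 le_rfl
  have hdisj3 := hdisj P3 hd3
  set ρ := algebraMap A[X] B[X] with hρ
  haveI prime1 : (P1.map ρ).IsPrime :=
    IsLocalization.isPrime_of_isPrime_disjoint M B[X] P1 hP1 hdisj1
  haveI prime2 : (P2.map ρ).IsPrime :=
    IsLocalization.isPrime_of_isPrime_disjoint M B[X] P2 hP2 hdisj2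
  haveI prime3 : (P3.map ρ).IsPrime :=
    IsLocalization.isPrime_of_isPrime_disjoint M B[X] P3 hP3 hdisj3
  have hc1 : (P1.map ρ).comap ρ = P1 :=
    IsLocalization.comap_map_of_isPrime_disjoint M B[X] hP1 hdisj1
  have hc2 : (P2.map ρ).comap ρ = P2 :=
    IsLocalization.comap_map_of_isPrime_disjoint M B[X] hP2 hdisj2
  have hc3 : (P3.map ρ).comap ρ = P3 :=
    IsLocalization.comap_map_of_isPrime_disjoint M B[X] hP3 hdisj3
  have hne1 : P1.map ρ ≠ ⊥ := by
    intro h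
    apply h01.ne'
    rw [← hc1, h]
    ext x
    simp only [Ideal.mem_comap, Ideal.mem_bot, hρ,
      map_eq_zero_iff _ (IsLocalization.injective B[X] hMle)]
  have hlt12 : P1.map ρ < P2.map ρ :=
    lt_of_le_of_ne (Ideal.map_mono h12.le) fun h => h12.ne (by rw [← hc1, ← hc2, h])
  have hlt23 : P2.map ρ < P3.map ρ :=
    lt_of_le_of_ne (Ideal.map_mono h23.le) fun h => h23.ne (by rw [← hc2, ← hc3, h])
  exact no_chain_poly_pid (P1.map ρ) (P2.map ρ) (P3.map ρ)
    (bot_lt_iff_ne_bot.mpr hne1) hlt12 hlt23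
end

/-- Every maximal ideal of `A[X]` meets the multiplicative set generated by `f` and the
elements `1 + f * g`. -/
theorem maximal_meets {A : Type*} [CommRing A] [IsDomain A] (f : Polynomial A)
    (m : Ideal (Polynomial A)) (hm : m.IsMaximal) :
    ¬ Disjoint ((Submonoid.closure ({f} ∪ Set.range (fun g : Polynomial A => 1 + f * g)) :
      Submonoid (Polynomial A)) : Set (Polynomial A)) (m : Set (Polynomial A)) := by
  intro hdis
  by_cases hfm : f ∈ m
  · exact Set.disjoint_left.mp hdis (Submonoid.subset_closure (Or.inl rfl)) hfm
  · letI : Field (Polynomial A ⧸ m) := Ideal.Quotient.field m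
    have h0 : Ideal.Quotient.mk m f ≠ 0 := fun h => hfm (Ideal.Quotient.eq_zero_iff_mem.mp h)
    obtain ⟨g, hg⟩ := Ideal.Quotient.mk_surjective (-(Ideal.Quotient.mk m f)⁻¹)
    have hmem : (1 + f * g) ∈ m := by
      rw [← Ideal.Quotient.eq_zero_iff_mem, map_add, map_one, map_mul, hg, mul_neg,
        mul_inv_cancel₀ h0]
      ring
    exact Set.disjoint_left.mp hdis
      (Submonoid.subset_closure (Or.inr ⟨g, rfl⟩)) hmem

/-- Let `A` be a Dedekind domain and let `f` be a nonzero non-unit element of the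
polynomial ring `A[x]`. Let `S` be the multiplicative subset of `A[x]` generated by `f`
together with all elements of the form `1 + f * g` with `g ∈ A[x]`. Then the
localization `S⁻¹(A[x])` is a Dedekind domain. -/
theorem stmt_1 (A : Type*) [CommRing A] [IsDedekindDomain A]
    (f : Polynomial A) (hf0 : f ≠ 0) (hfu : ¬ IsUnit f) :
    IsDedekindDomain
      (Localization
        (Submonoid.closure ({f} ∪ Set.range (fun g : Polynomial A => 1 + f * g)))) := by
  set M : Submonoid (Polynomial A) :=
    Submonoid.closure ({f} ∪ Set.range (fun g : Polynomial A => 1 + f * g)) with hMdef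
  set L := Localization M with hL
  have hM0 : ∀ x ∈ M, x ≠ (0 : Polynomial A) := by
    intro x hx
    induction hx using Submonoid.closure_induction with
    | mem y hy =>
      rcases hy with hy | ⟨g, rfl⟩
      · rw [Set.mem_singleton_iff] at hy; subst hy; exact hf0
      · intro h0
        apply hfu
        refine IsUnit.of_mul_eq_one (-g) ?_
        rw [mul_neg, neg_eq_iff_add_eq_zero, add_comm]
        exact h0
    | one => exact one_ne_zero
    | mul a b _ _ ha hb => exact mul_ne_zero ha hb
  have hMle : M ≤ nonZeroDivisors (Polynomial A) := fun x hx =>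
    mem_nonZeroDivisors_of_ne_zero (hM0 x hx)
  haveI : IsDomain L := IsLocalization.isDomain_localization hMle
  haveI : IsNoetherianRing L := IsLocalization.isNoetherianRing M L inferInstance
  haveI : IsIntegrallyClosed (Polynomial A) := polynomial_isIntegrallyClosed
  haveI : IsIntegrallyClosed L := isIntegrallyClosed_of_isLocalization L M hMle
  haveI : Ring.DimensionLEOne L := by
    constructor
    intro P hPne hPp
    obtain ⟨Q, hQm, hPQ⟩ := P.exists_le_maximal hPp.ne_top
    rcases eq_or_lt_of_le hPQ with rfl | hlt
    · exact hQm
    exfalso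
    haveI hQp : Q.IsPrime := hQm.isPrime
    set p : Ideal (Polynomial A) := P.comap (algebraMap (Polynomial A) L) with hp
    set q : Ideal (Polynomial A) := Q.comap (algebraMap (Polynomial A) L) with hq
    haveI : p.IsPrime := Ideal.IsPrime.comap _
    haveI : q.IsPrime := Ideal.IsPrime.comap _
    have hqdis : Disjoint (M : Set (Polynomial A)) (q : Set (Polynomial A)) :=
      ((IsLocalization.isPrime_iff_isPrime_disjoint M L Q).mp hQp).2
    have hpq : p < q := by
      refine lt_of_le_of_ne (Ideal.comap_mono hlt.le) fun h => hlt.ne ?_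
      rw [← IsLocalization.map_comap M L P, ← IsLocalization.map_comap M L Q, Ideal.under_def,
        Ideal.under_def, ← hp, ← hq, h]
    have hpne : p ≠ ⊥ := by
      intro h
      apply hPne
      rw [← IsLocalization.map_comap M L P, Ideal.under_def, ← hp, h, Ideal.map_bot]
    have hqnm : ¬ q.IsMaximal := fun h => maximal_meets f q h hqdis
    obtain ⟨m, hmm, hqm⟩ := q.exists_le_maximal (Ideal.IsPrime.ne_top ‹q.IsPrime›)
    haveI : m.IsPrime := hmm.isPrime
    have hqmlt : q < m := lt_of_le_of_ne hqm fun h => hqnm (h ▸ hmm)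
    exact no_chain_poly_dedekind p q m (bot_lt_iff_ne_bot.mpr hpne) hpq hqmlt
  refine { toIsDomain := inferInstance, toIsDedekindRing := ?_ }
  exact (isDedekindRing_iff L (FractionRing L)).mpr
    ⟨inferInstance, inferInstance, fun hx => (isIntegrallyClosed_iff _).mp inferInstance hx⟩
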